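/- Let (X, Y, Z) be random vectors in ℝ^d × ℝ^n × ℝ^m with a strictly positive joint Lebesgue density π_{X,Y,Z}, and define the conditional densities π_{Y|Z}(y|z), π_{X|Y,Z}(x|y,z), π_{Y|X,Z}(y|x,z), and π_{X|Z}(x|z) as the corresponding ratios of marginal densities; assume π_{X|Y,Z}(x|y,z) is continuously differentiable in y for each (x,z). Suppose for each fixed z the conditional measure with density π_{Y|Z}(·|z) satisfies the log-Sobolev inequality with constant κ ≥ 1 and symmetric positive definite matrix Γ_{Y|z} ∈ ℝ^{n×n}: for every continuously differentiable h: ℝ^n → ℝ with the relevant integrability, Ent_{π_{Y|Z=z}}[h²] ≤ 2κ ∫ ‖∇h(y)‖²_{Γ_{Y|z}} π_{Y|Z}(y|z) dy. Assume all integrals below are finite. Then the conditional mutual information satisfies I(X;Y|Z) ≤ (κ/2) ∫∫∫ ‖∇_y log π_{X|Y,Z}(x|y,z)‖²_{Γ_{Y|z}} π_{X,Y,Z}(x,y,z) dx dy dz. -/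

import Mathlib

open MeasureTheory Matrix
open scoped NNReal ENNReal

/-- The entropy functional `Ent_μ[f] = ∫ f log (f / ∫ f dμ) dμ`. -/
noncomputable def entFun {α : Type*} [MeasurableSpace α] (μ : Measure α) (f : α → ℝ) : ℝ :=
  ∫ x, f x * Real.log (f x / ∫ y, f y ∂μ) ∂μ

/-- The Γ-weighted squared norm `‖v‖²_Γ = vᵀ Γ v`. -/
noncomputable def quadForm {p : ℕ} (Γ : Matrix (Fin p) (Fin p) ℝ)
    (v : EuclideanSpace ℝ (Fin p)) : ℝ :=
  (v : Fin p → ℝ) ⬝ᵥ Γ.mulVec (v : Fin p → ℝ)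

lemma quadForm_smul {p : ℕ} (Γ : Matrix (Fin p) (Fin p) ℝ) (c : ℝ)
    (v : EuclideanSpace ℝ (Fin p)) : quadForm Γ (c • v) = c ^ 2 * quadForm Γ v := by
  show (c • (v : Fin p → ℝ)) ⬝ᵥ Γ.mulVec (c • (v : Fin p → ℝ)) = _
  rw [Matrix.mulVec_smul, smul_dotProduct, dotProduct_smul]
  simp [quadForm, smul_eq_mul, sq]; ring

section grad
variable {E : Type*} [NormedAddCommGroup E] [InnerProductSpace ℝ E] [CompleteSpace E]

lemma contDiff_one_of_hasGradientAt {f : E → ℝ} {g : E → E}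
    (h : ∀ y, HasGradientAt f (g y) y) (hc : Continuous g) : ContDiff ℝ 1 f := by
  rw [contDiff_one_iff_fderiv]
  refine ⟨fun y => (h y).differentiableAt, ?_⟩
  have : fderiv ℝ f = fun y => (InnerProductSpace.toDual ℝ E) (g y) := by
    funext y
    exact (h y).hasFDerivAt.fderiv
  rw [this]
  exact (InnerProductSpace.toDual ℝ E).continuous.comp hc

lemma hasGradientAt_exp_half {f : E → ℝ} {v : E} {y : E} (hf : HasGradientAt f v y) :
    HasGradientAt (fun y => Real.exp (f y / 2)) ((Real.exp (f y / 2) / 2) • v) y := by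
  have h1 : HasFDerivAt (fun y => f y / 2) ((2 : ℝ)⁻¹ • (InnerProductSpace.toDual ℝ E v)) y := by
    simpa [div_eq_inv_mul, smul_smul] using
      (show HasFDerivAt (fun y => (2:ℝ)⁻¹ • f y) ((2 : ℝ)⁻¹ • (InnerProductSpace.toDual ℝ E v)) y from
        hf.hasFDerivAt.const_smul (2 : ℝ)⁻¹)
  have h2 := (Real.hasDerivAt_exp (f y / 2)).comp_hasFDerivAt y h1
  rw [hasGradientAt_iff_hasFDerivAt]
  have h3 : (InnerProductSpace.toDual ℝ E) ((Real.exp (f y / 2) / 2) • v)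
      = Real.exp (f y / 2) • (2 : ℝ)⁻¹ • (InnerProductSpace.toDual ℝ E) v := by
    rw [_root_.map_smul, smul_smul, div_eq_mul_inv]
  rw [h3]
  exact h2

end grad

lemma slice_ineq {n : ℕ}
    (Γ : Matrix (Fin n) (Fin n) ℝ) (κ : ℝ) (hκ : 1 ≤ κ)
    (p ρ : EuclideanSpace ℝ (Fin n) → ℝ)
    (G : EuclideanSpace ℝ (Fin n) → EuclideanSpace ℝ (Fin n))
    (c a : ℝ) (hc : 0 < c) (ha : 0 < a)
    (hppos : ∀ y, 0 < p y)
    (hρmeas : Measurable ρ)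
    (hρ0 : ∀ y, 0 ≤ ρ y)
    (hρpos : ∀ᵐ y : EuclideanSpace ℝ (Fin n), 0 < ρ y)
    (hpint : Integrable p)
    (hpa : (∫ y, p y) = a)
    (hG : ∀ y, HasGradientAt (fun y' => Real.log (p y' / ρ y')) (G y) y)
    (hGcont : Continuous G)
    (hLSI : ∀ h : EuclideanSpace ℝ (Fin n) → ℝ, ContDiff ℝ 1 h →
      Integrable (fun y => h y ^ 2 * Real.log (h y ^ 2))
        (volume.withDensity fun y => ENNReal.ofReal (ρ y / c)) →
      Integrable (fun y => h y ^ 2)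
        (volume.withDensity fun y => ENNReal.ofReal (ρ y / c)) →
      Integrable (fun y => quadForm Γ (gradient h y))
        (volume.withDensity fun y => ENNReal.ofReal (ρ y / c)) →
      entFun (volume.withDensity fun y => ENNReal.ofReal (ρ y / c)) (fun y => h y ^ 2) ≤
        2 * κ * ∫ y, quadForm Γ (gradient h y)
          ∂(volume.withDensity fun y => ENNReal.ofReal (ρ y / c)))
    (hint1 : Integrable (fun y => p y * Real.log ((p y / a) / (ρ y / c))))
    (hint2 : Integrable (fun y => quadForm Γ (G y) * p y)) :
    (∫ y, p y * Real.log ((p y / a) / (ρ y / c))) ≤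
      κ / 2 * ∫ y, quadForm Γ (G y) * p y := by
  classical
  set L : EuclideanSpace ℝ (Fin n) → ℝ := fun y => Real.log (p y / ρ y) with hLdef
  set h : EuclideanSpace ℝ (Fin n) → ℝ := fun y => Real.exp (L y / 2) with hhdef
  have hL1 : ContDiff ℝ 1 L := contDiff_one_of_hasGradientAt hG hGcont
  have hh1 : ContDiff ℝ 1 h := Real.contDiff_exp.comp (hL1.div_const 2)
  have hgrad : ∀ y, gradient h y = (h y / 2) • G y :=
    fun y => (hasGradientAt_exp_half (hG y)).gradient
  have hsq : ∀ y, h y ^ 2 = Real.exp (L y) := by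
    intro y
    rw [hhdef, pow_two, ← Real.exp_add]
    congr 1
    ring
  have hsq' : ∀ᵐ y : EuclideanSpace ℝ (Fin n), h y ^ 2 = p y / ρ y := by
    filter_upwards [hρpos] with y hy
    rw [hsq y, hLdef, Real.exp_log (div_pos (hppos y) hy)]
  -- density as ℝ≥0
  have hwmeas : Measurable (fun y => Real.toNNReal (ρ y / c)) :=
    (hρmeas.div_const c).real_toNNReal
  have hwd : (fun y => ENNReal.ofReal (ρ y / c))
      = fun y => ((Real.toNNReal (ρ y / c) : ℝ≥0) : ℝ≥0∞) := rfl
  have hsmul : ∀ (q : EuclideanSpace ℝ (Fin n) → ℝ) y,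
      Real.toNNReal (ρ y / c) • q y = (ρ y / c) * q y := by
    intro q y
    rw [NNReal.smul_def, Real.coe_toNNReal _ (div_nonneg (hρ0 y) hc.le), smul_eq_mul]
  have hIntIff : ∀ q : EuclideanSpace ℝ (Fin n) → ℝ,
      Integrable q (volume.withDensity fun y => ENNReal.ofReal (ρ y / c)) ↔
        Integrable (fun y => (ρ y / c) * q y) volume := by
    intro q
    rw [hwd, integrable_withDensity_iff_integrable_smul hwmeas]
    simp_rw [hsmul q]
  have hIntEq : ∀ q : EuclideanSpace ℝ (Fin n) → ℝ,
      (∫ y, q y ∂(volume.withDensity fun y => ENNReal.ofReal (ρ y / c)))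
        = ∫ y, (ρ y / c) * q y := by
    intro q
    rw [hwd, integral_withDensity_eq_integral_smul hwmeas]
    simp_rw [hsmul q]
  -- mass
  have hM : (∫ y, h y ^ 2 ∂(volume.withDensity fun y => ENNReal.ofReal (ρ y / c))) = a / c := by
    rw [hIntEq]
    have : (fun y => (ρ y / c) * h y ^ 2) =ᵐ[volume] fun y => p y / c := by
      filter_upwards [hρpos, hsq'] with y hy hy2
      rw [hy2]
      field_simp
    rw [integral_congr_ae this, integral_div, hpa]
  -- integrability of h² against μ
  have hI2' : (fun y => (ρ y / c) * h y ^ 2) =ᵐ[volume] fun y => p y / c := by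
    filter_upwards [hρpos, hsq'] with y hy hy2
    rw [hy2]
    field_simp
  have hI2 : Integrable (fun y => h y ^ 2)
      (volume.withDensity fun y => ENNReal.ofReal (ρ y / c)) :=
    (hIntIff _).2 ((hpint.div_const c).congr hI2'.symm)
  -- integrability of p * L
  have hpL : Integrable (fun y => p y * L y) volume := by
    have he : (fun y => p y * Real.log ((p y / a) / (ρ y / c)) - p y * Real.log (c / a))
        =ᵐ[volume] fun y => p y * L y := by
      filter_upwards [hρpos] with y hy
      have hρne : ρ y ≠ 0 := hy.ne'
      have hane : a ≠ 0 := ha.ne'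
      have hcne : c ≠ 0 := hc.ne'
      have harg : (p y / a) / (ρ y / c) = (p y / ρ y) * (c / a) := by
        rw [div_div_div_comm, div_div_eq_mul_div, mul_div_assoc]
      rw [harg, Real.log_mul (div_pos (hppos y) hy).ne' (div_pos hc ha).ne', hLdef]
      ring
    exact (hint1.sub (hpint.mul_const _)).congr he
  have hI1 : Integrable (fun y => h y ^ 2 * Real.log (h y ^ 2))
      (volume.withDensity fun y => ENNReal.ofReal (ρ y / c)) := by
    refine (hIntIff _).2 (((hpL.div_const c)).congr ?_)
    filter_upwards [hρpos, hsq'] with y hy hy2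
    have hlog : Real.log (h y ^ 2) = L y := by rw [hsq y, Real.log_exp]
    rw [hlog, hy2]
    have : ρ y ≠ 0 := hy.ne'
    field_simp
  -- integrability of quadForm of gradient
  have hI3' : (fun y => (ρ y / c) * quadForm Γ (gradient h y))
      =ᵐ[volume] fun y => (quadForm Γ (G y) * p y) / (4 * c) := by
    filter_upwards [hρpos, hsq'] with y hy hy2
    rw [hgrad y, quadForm_smul, div_pow, hy2]
    have : ρ y ≠ 0 := hy.ne'
    field_simp
    ring
  have hI3 : Integrable (fun y => quadForm Γ (gradient h y))
      (volume.withDensity fun y => ENNReal.ofReal (ρ y / c)) :=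
    (hIntIff _).2 ((hint2.div_const (4 * c)).congr hI3'.symm)
  have key := hLSI h hh1 hI1 hI2 hI3
  -- rewrite both sides of key
  have hent : entFun (volume.withDensity fun y => ENNReal.ofReal (ρ y / c)) (fun y => h y ^ 2)
      = (∫ y, p y * Real.log ((p y / a) / (ρ y / c))) / c := by
    rw [entFun, hIntEq]
    have : (fun y => (ρ y / c) * (h y ^ 2 *
        Real.log (h y ^ 2 / ∫ y', h y' ^ 2 ∂(volume.withDensity
          fun y => ENNReal.ofReal (ρ y / c)))))
        =ᵐ[volume] fun y => (p y * Real.log ((p y / a) / (ρ y / c))) / c := by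
      filter_upwards [hρpos, hsq'] with y hy hy2
      rw [hM, hy2]
      have harg : (p y / ρ y) / (a / c) = (p y / a) / (ρ y / c) := div_div_div_comm _ _ _ _
      rw [harg]
      have : ρ y ≠ 0 := hy.ne'
      field_simp
    rw [integral_congr_ae this, integral_div]
  have hrhs : (∫ y, quadForm Γ (gradient h y)
      ∂(volume.withDensity fun y => ENNReal.ofReal (ρ y / c)))
      = (∫ y, quadForm Γ (G y) * p y) / (4 * c) := by
    rw [hIntEq, integral_congr_ae hI3', integral_div]
  rw [hent, hrhs] at key
  have hc' : c ≠ 0 := hc.ne'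
  have := mul_le_mul_of_nonneg_left key hc.le
  rw [mul_div_cancel₀ _ hc'] at this
  calc (∫ y, p y * Real.log ((p y / a) / (ρ y / c)))
      ≤ c * (2 * κ * ((∫ y, quadForm Γ (G y) * p y) / (4 * c))) := this
    _ = κ / 2 * ∫ y, quadForm Γ (G y) * p y := by field_simp; ring

lemma integral_pos_of_pos {α : Type*} [MeasurableSpace α] {μ : Measure α}
    (hμ : μ Set.univ ≠ 0) {f : α → ℝ} (hf : ∀ v, 0 < f v) (hi : Integrable f μ) :
    0 < ∫ v, f v ∂μ := by
  rw [integral_pos_iff_support_of_nonneg (fun v => (hf v).le) hi]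
  have hs : Function.support f = Set.univ := Set.eq_univ_of_forall fun v => (hf v).ne'
  rw [hs]
  exact pos_iff_ne_zero.mpr hμ


/-- If for each `z` the conditional density `π_{Y|Z}(·|z)` satisfies a log-Sobolev inequality
with constant `κ` and matrix `Γ_{Y|z}`, then the conditional mutual information satisfies
`I(X;Y|Z) ≤ (κ/2) ∫∫∫ ‖∇_y log π_{X|Y,Z}(x|y,z)‖²_{Γ_{Y|z}} π_{X,Y,Z}(x,y,z) dx dy dz`. -/
theorem cond_mutual_information_le_of_log_sobolev
    {d n m : ℕ}
    (π : EuclideanSpace ℝ (Fin d) → EuclideanSpace ℝ (Fin n) → EuclideanSpace ℝ (Fin m) → ℝ)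
    (hπmeas : Measurable
      (fun q : EuclideanSpace ℝ (Fin d) × EuclideanSpace ℝ (Fin n) × EuclideanSpace ℝ (Fin m) =>
        π q.1 q.2.1 q.2.2))
    (hπpos : ∀ x y z, 0 < π x y z)
    (hπprob : (∫ q : EuclideanSpace ℝ (Fin d) × EuclideanSpace ℝ (Fin n) ×
        EuclideanSpace ℝ (Fin m), π q.1 q.2.1 q.2.2) = 1)
    -- marginal densities
    (πYZ : EuclideanSpace ℝ (Fin n) → EuclideanSpace ℝ (Fin m) → ℝ)
    (hπYZ : ∀ y z, πYZ y z = ∫ x, π x y z)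
    (πXZ : EuclideanSpace ℝ (Fin d) → EuclideanSpace ℝ (Fin m) → ℝ)
    (hπXZ : ∀ x z, πXZ x z = ∫ y, π x y z)
    (πZ : EuclideanSpace ℝ (Fin m) → ℝ)
    (hπZ : ∀ z, πZ z = ∫ q : EuclideanSpace ℝ (Fin d) × EuclideanSpace ℝ (Fin n), π q.1 q.2 z)
    -- `g x y z` is the gradient in `y` of `log π_{X|Y,Z}(x|y,z)`, assumed to exist and be
    -- continuous in `y` for each fixed `(x, z)`
    (g : EuclideanSpace ℝ (Fin d) → EuclideanSpace ℝ (Fin n) → EuclideanSpace ℝ (Fin m) →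
      EuclideanSpace ℝ (Fin n))
    (hg : ∀ x y z, HasGradientAt (fun y' => Real.log (π x y' z / πYZ y' z)) (g x y z) y)
    (hgcont : ∀ x z, Continuous (fun y => g x y z))
    (κ : ℝ) (hκ : 1 ≤ κ)
    (Γ : EuclideanSpace ℝ (Fin m) → Matrix (Fin n) (Fin n) ℝ) (hΓ : ∀ z, (Γ z).PosDef)
    -- log-Sobolev inequality for each conditional `π_{Y|Z}(·|z)`
    (hLSI : ∀ z, ∀ h : EuclideanSpace ℝ (Fin n) → ℝ, ContDiff ℝ 1 h →
      Integrable (fun y => h y ^ 2 * Real.log (h y ^ 2))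
        (volume.withDensity fun y => ENNReal.ofReal (πYZ y z / πZ z)) →
      Integrable (fun y => h y ^ 2)
        (volume.withDensity fun y => ENNReal.ofReal (πYZ y z / πZ z)) →
      Integrable (fun y => quadForm (Γ z) (gradient h y))
        (volume.withDensity fun y => ENNReal.ofReal (πYZ y z / πZ z)) →
      entFun (volume.withDensity fun y => ENNReal.ofReal (πYZ y z / πZ z)) (fun y => h y ^ 2) ≤
        2 * κ * ∫ y, quadForm (Γ z) (gradient h y)
          ∂(volume.withDensity fun y => ENNReal.ofReal (πYZ y z / πZ z)))
    (hCMIint : Integrable (fun q : EuclideanSpace ℝ (Fin d) × EuclideanSpace ℝ (Fin n) ×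
        EuclideanSpace ℝ (Fin m) =>
      π q.1 q.2.1 q.2.2 *
        Real.log ((π q.1 q.2.1 q.2.2 / πXZ q.1 q.2.2) / (πYZ q.2.1 q.2.2 / πZ q.2.2))))
    (hRHSint : Integrable (fun q : EuclideanSpace ℝ (Fin d) × EuclideanSpace ℝ (Fin n) ×
        EuclideanSpace ℝ (Fin m) =>
      quadForm (Γ q.2.2) (g q.1 q.2.1 q.2.2) * π q.1 q.2.1 q.2.2)) :
    (∫ q : EuclideanSpace ℝ (Fin d) × EuclideanSpace ℝ (Fin n) × EuclideanSpace ℝ (Fin m),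
        π q.1 q.2.1 q.2.2 *
          Real.log ((π q.1 q.2.1 q.2.2 / πXZ q.1 q.2.2) / (πYZ q.2.1 q.2.2 / πZ q.2.2))) ≤
      κ / 2 * ∫ q : EuclideanSpace ℝ (Fin d) × EuclideanSpace ℝ (Fin n) ×
          EuclideanSpace ℝ (Fin m),
        quadForm (Γ q.2.2) (g q.1 q.2.1 q.2.2) * π q.1 q.2.1 q.2.2 := by
  classical
  have hvol : ∀ k : ℕ, (volume : Measure (EuclideanSpace ℝ (Fin k))) Set.univ ≠ 0 :=
    fun k => ((isOpen_univ (X := EuclideanSpace ℝ (Fin k))).measure_pos volume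
      ⟨0, trivial⟩).ne'
  have hvol2 : ((volume : Measure (EuclideanSpace ℝ (Fin d))).prod
      (volume : Measure (EuclideanSpace ℝ (Fin n)))) Set.univ ≠ 0 := by
    rw [← Set.univ_prod_univ, Measure.prod_prod]
    exact mul_ne_zero (hvol d) (hvol n)
  -- joint density is integrable
  have hPivol : Integrable (fun q : EuclideanSpace ℝ (Fin d) × EuclideanSpace ℝ (Fin n) ×
      EuclideanSpace ℝ (Fin m) => π q.1 q.2.1 q.2.2) volume := by
    by_contra hcon
    rw [integral_undef hcon] at hπprob
    exact one_ne_zero hπprob.symm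
  have hPi : Integrable (fun q : EuclideanSpace ℝ (Fin d) × EuclideanSpace ℝ (Fin n) ×
      EuclideanSpace ℝ (Fin m) => π q.1 q.2.1 q.2.2)
      ((volume : Measure (EuclideanSpace ℝ (Fin d))).prod
        ((volume : Measure (EuclideanSpace ℝ (Fin n))).prod
          (volume : Measure (EuclideanSpace ℝ (Fin m))))) := hPivol
  have hCMI : Integrable (fun q : EuclideanSpace ℝ (Fin d) × EuclideanSpace ℝ (Fin n) ×
      EuclideanSpace ℝ (Fin m) =>
      π q.1 q.2.1 q.2.2 *
        Real.log ((π q.1 q.2.1 q.2.2 / πXZ q.1 q.2.2) / (πYZ q.2.1 q.2.2 / πZ q.2.2)))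
      ((volume : Measure (EuclideanSpace ℝ (Fin d))).prod
        ((volume : Measure (EuclideanSpace ℝ (Fin n))).prod
          (volume : Measure (EuclideanSpace ℝ (Fin m))))) := hCMIint
  have hRHS : Integrable (fun q : EuclideanSpace ℝ (Fin d) × EuclideanSpace ℝ (Fin n) ×
      EuclideanSpace ℝ (Fin m) =>
      quadForm (Γ q.2.2) (g q.1 q.2.1 q.2.2) * π q.1 q.2.1 q.2.2)
      ((volume : Measure (EuclideanSpace ℝ (Fin d))).prod
        ((volume : Measure (EuclideanSpace ℝ (Fin n))).prod
          (volume : Measure (EuclideanSpace ℝ (Fin m))))) := hRHSint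
  -- reassociated integrability, for the z-marginal facts
  have hassoc := measurePreserving_prodAssoc (volume : Measure (EuclideanSpace ℝ (Fin d)))
    (volume : Measure (EuclideanSpace ℝ (Fin n))) (volume : Measure (EuclideanSpace ℝ (Fin m)))
  have hPi2 : Integrable (fun r : (EuclideanSpace ℝ (Fin d) × EuclideanSpace ℝ (Fin n)) ×
      EuclideanSpace ℝ (Fin m) => π r.1.1 r.1.2 r.2)
      (((volume : Measure (EuclideanSpace ℝ (Fin d))).prod
        (volume : Measure (EuclideanSpace ℝ (Fin n)))).prod
          (volume : Measure (EuclideanSpace ℝ (Fin m)))) :=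
    (hassoc.integrable_comp hPi.aestronglyMeasurable).2 hPi
  -- facts depending on z only
  have hZfacts : ∀ᵐ z : EuclideanSpace ℝ (Fin m),
      0 < πZ z ∧ ∀ᵐ y : EuclideanSpace ℝ (Fin n), 0 < πYZ y z := by
    filter_upwards [hPi2.prod_left_ae] with z hz
    refine ⟨?_, ?_⟩
    · rw [hπZ z]
      exact integral_pos_of_pos hvol2 (fun q => hπpos q.1 q.2 z) hz
    · filter_upwards [hz.prod_left_ae] with y hy
      rw [hπYZ y z]
      exact integral_pos_of_pos (hvol d) (fun x => hπpos x y z) hy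
  -- unfold the outer integral
  rw [MeasureTheory.Measure.volume_eq_prod, MeasureTheory.Measure.volume_eq_prod, integral_prod _ hCMI, integral_prod _ hRHS, ← integral_const_mul]
  refine integral_mono_ae hCMI.integral_prod_left
    ((hRHS.integral_prod_left).const_mul _) ?_
  filter_upwards [hCMI.prod_right_ae, hRHS.prod_right_ae, hPi.prod_right_ae]
    with x hφx hψx hπx
  rw [integral_prod_symm _ hφx, integral_prod_symm _ hψx, ← integral_const_mul]
  refine integral_mono_ae hφx.integral_prod_right
    ((hψx.integral_prod_right).const_mul _) ?_
  filter_upwards [hφx.prod_left_ae, hψx.prod_left_ae, hπx.prod_left_ae, hZfacts]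
    with z hφz hψz hπz hZz
  -- measurability of the conditional density in y
  have hmeasYZ : Measurable (fun y : EuclideanSpace ℝ (Fin n) => πYZ y z) := by
    have hm : StronglyMeasurable
        (fun q : EuclideanSpace ℝ (Fin d) × EuclideanSpace ℝ (Fin n) => π q.1 q.2 z) :=
      (hπmeas.comp (measurable_fst.prodMk
        (measurable_snd.prodMk measurable_const))).stronglyMeasurable
    have h2 := hm.integral_prod_left' (μ := (volume : Measure (EuclideanSpace ℝ (Fin d))))
    have h3 : (fun y : EuclideanSpace ℝ (Fin n) => πYZ y z)
        = fun y => ∫ x, π x y z := funext fun y => hπYZ y z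
    rw [h3]
    exact h2.measurable
  have hXZpos : 0 < πXZ x z := by
    rw [hπXZ]
    exact integral_pos_of_pos (hvol n) (fun y => hπpos x y z) hπz
  exact slice_ineq (Γ z) κ hκ (fun y => π x y z) (fun y => πYZ y z) (fun y => g x y z)
    (πZ z) (πXZ x z) hZz.1 hXZpos (fun y => hπpos x y z) hmeasYZ
    (fun y => by
      show (0:ℝ) ≤ πYZ y z
      rw [hπYZ y z]
      exact integral_nonneg fun x' => (hπpos x' y z).le)
    hZz.2 hπz (hπXZ x z).symm (fun y => hg x y z) (hgcont x z) (hLSI z) hφz hψz
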